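/- For every natural number k ≥ 1 there exists a natural number m_k with 2^{k-1} ≤ m_k < 2^k such that the L^1 norm of the Dirichlet–Walsh kernel satisfies ∫_0^1 |D_{m_k}(x)| dx ≥ (1/4)·log_2(m_k). -/

import Mathlib

open MeasureTheory Filter Finset

/-- The 1-periodic base Rademacher function: `1` on `[0,1/2)`, `-1` on `[1/2,1)`. -/
noncomputable def r0 (x : ℝ) : ℝ := if Int.fract x < 1/2 then 1 else -1

/-- The `k`-th Rademacher function `r_k(x) = r_0(2^k x)`. -/
noncomputable def rad (k : ℕ) (x : ℝ) : ℝ := r0 (2 ^ k * x)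

/-- The Walsh–Paley function `W_n`: product of the Rademacher functions `r_k`
over the bits `k` appearing in the binary expansion of `n`. -/
noncomputable def walsh (n : ℕ) (x : ℝ) : ℝ :=
  ∏ k ∈ Finset.range n, if n.testBit k then rad k x else 1

/-- The Dirichlet–Walsh kernel `D_m(x) = ∑_{i=0}^{m-1} W_i(x)`. -/
noncomputable def walshDirichlet (m : ℕ) (x : ℝ) : ℝ :=
  ∑ i ∈ Finset.range m, walsh i x

lemma abs_r0 (x : ℝ) : |r0 x| = 1 := by
  unfold r0; split <;> simp

lemma r0_pos {x : ℝ} (h0 : 0 ≤ x) (h : x < 1/2) : r0 x = 1 := by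
  unfold r0
  rw [Int.fract_eq_self.mpr ⟨h0, by linarith⟩]
  rw [if_pos h]

lemma r0_neg {x : ℝ} (h0 : 1/2 ≤ x) (h : x < 1) : r0 x = -1 := by
  unfold r0
  rw [Int.fract_eq_self.mpr ⟨by linarith, h⟩]
  rw [if_neg (not_lt.mpr h0)]

lemma meas_r0 : Measurable r0 := by
  unfold r0
  exact Measurable.ite (measurableSet_lt measurable_fract measurable_const)
    measurable_const measurable_const

lemma meas_rad (k : ℕ) : Measurable (rad k) :=
  meas_r0.comp (measurable_const_mul _)

lemma rad_zero (x : ℝ) : rad 0 x = r0 x := by simp [rad]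

lemma rad_succ (k : ℕ) (x : ℝ) : rad (k+1) x = rad k (2*x) := by
  unfold rad; ring_nf

lemma meas_walsh (n : ℕ) : Measurable (walsh n) := by
  unfold walsh
  apply Finset.measurable_prod
  intro k _
  split
  · exact meas_rad k
  · exact measurable_const

lemma abs_walsh (n : ℕ) (x : ℝ) : |walsh n x| = 1 := by
  unfold walsh
  rw [Finset.abs_prod]
  apply Finset.prod_eq_one
  intro k _
  split
  · exact abs_r0 _
  · simp

lemma meas_D (m : ℕ) : Measurable (walshDirichlet m) := by
  unfold walshDirichlet
  exact Finset.measurable_sum _ fun i _ => meas_walsh i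

lemma abs_D_le (m : ℕ) (x : ℝ) : |walshDirichlet m x| ≤ m := by
  unfold walshDirichlet
  calc |∑ i ∈ Finset.range m, walsh i x| ≤ ∑ i ∈ Finset.range m, |walsh i x| :=
        Finset.abs_sum_le_sum_abs _ _
    _ = m := by simp [abs_walsh]

lemma walsh_eq_prod (n N : ℕ) (h : n ≤ N) (x : ℝ) :
    walsh n x = ∏ k ∈ Finset.range N, if n.testBit k then rad k x else 1 := by
  unfold walsh
  apply Finset.prod_subset (Finset.range_subset_range.mpr h)
  intro k _ hk
  simp only [Finset.mem_range, not_lt] at hk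
  rw [Nat.testBit_eq_false_of_lt (lt_of_lt_of_le (Nat.lt_two_pow_self (n := n)) (Nat.pow_le_pow_right (by norm_num) hk))]
  simp

lemma walsh_two_mul (a : ℕ) (x : ℝ) : walsh (2*a) x = walsh a (2*x) := by
  rw [walsh_eq_prod (2*a) (2*a+1) (by omega) x, walsh_eq_prod a (2*a) (by omega) (2*x),
    Finset.prod_range_succ']
  have h0 : (2*a).testBit 0 = false := by simp [Nat.testBit_zero, Nat.mul_mod_right]
  rw [h0, if_neg (by simp), mul_one]
  apply Finset.prod_congr rfl
  intro k _
  rw [Nat.testBit_succ, Nat.mul_div_cancel_left a (by norm_num), rad_succ]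

lemma walsh_two_mul_add_one (a : ℕ) (x : ℝ) :
    walsh (2*a+1) x = r0 x * walsh a (2*x) := by
  rw [walsh_eq_prod (2*a+1) (2*a+2) (by omega) x, walsh_eq_prod a (2*a+1) (by omega) (2*x),
    Finset.prod_range_succ']
  have h0 : (2*a+1).testBit 0 = true := by simp [Nat.testBit_zero, Nat.mul_add_mod]
  rw [h0, if_pos rfl, rad_zero, mul_comm]
  congr 1
  apply Finset.prod_congr rfl
  intro k _
  rw [Nat.testBit_succ, show (2*a+1)/2 = a by omega, rad_succ]

lemma D_succ (m : ℕ) (x : ℝ) :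
    walshDirichlet (m+1) x = walshDirichlet m x + walsh m x := by
  unfold walshDirichlet
  exact Finset.sum_range_succ _ _

lemma D_two_mul (a : ℕ) (x : ℝ) :
    walshDirichlet (2*a) x = (1 + r0 x) * walshDirichlet a (2*x) := by
  induction a with
  | zero => simp [walshDirichlet]
  | succ a ih =>
    have : 2*(a+1) = (2*a+1)+1 := by ring
    rw [this, D_succ, show 2*a+1 = (2*a)+1 from rfl, D_succ, ih, D_succ,
      walsh_two_mul, walsh_two_mul_add_one]
    ring

lemma D_four (a : ℕ) (x : ℝ) :
    walshDirichlet (4*a+1) x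
      = (1 + r0 x) * (1 + r0 (2*x)) * walshDirichlet a (4*x) + walsh a (4*x) := by
  have h4 : 4*a = 2*(2*a) := by ring
  rw [D_succ, h4, D_two_mul, D_two_mul, walsh_two_mul, walsh_two_mul]
  have : 2*(2*x) = 4*x := by ring
  rw [this]
  ring

lemma intDc (m : ℕ) (c a b : ℝ) :
    IntegrableOn (fun x => |walshDirichlet m (c * x)|) (Set.Ico a b) := by
  apply Integrable.mono' (g := fun _ => (m:ℝ))
  · exact integrableOn_const measure_Ico_lt_top.ne
  · exact (((meas_D m).comp (measurable_const_mul c)).abs).aestronglyMeasurable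
  · refine Filter.Eventually.of_forall fun x => ?_
    rw [Real.norm_eq_abs, abs_abs]
    exact abs_D_le m _

lemma intD (m : ℕ) (a b : ℝ) :
    IntegrableOn (fun x => |walshDirichlet m x|) (Set.Ico a b) := by
  have := intDc m 1 a b
  simpa using this

lemma scaleD (m : ℕ) {c : ℝ} (hc : 0 < c) :
    ∫ x in Set.Ico (0:ℝ) (1/c), |walshDirichlet m (c * x)|
      = (1/c) * ∫ x in Set.Ico (0:ℝ) 1, |walshDirichlet m x| := by
  rw [integral_Ico_eq_integral_Ioo, integral_Ico_eq_integral_Ioo,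
    ← integral_Ioc_eq_integral_Ioo, ← integral_Ioc_eq_integral_Ioo,
    ← intervalIntegral.integral_of_le (by positivity : (0:ℝ) ≤ 1/c),
    ← intervalIntegral.integral_of_le (by norm_num : (0:ℝ) ≤ 1),
    show (∫ x in (0:ℝ)..(1/c), |walshDirichlet m (c*x)|)
      = c⁻¹ • ∫ x in (c*0)..(c*(1/c)), |walshDirichlet m x| from
      intervalIntegral.integral_comp_mul_left (fun u => |walshDirichlet m u|) hc.ne']
  rw [mul_zero, mul_one_div, div_self hc.ne', smul_eq_mul, one_div]

lemma L_two_mul (a : ℕ) :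
    ∫ x in Set.Ico (0:ℝ) 1, |walshDirichlet (2*a) x|
      = ∫ x in Set.Ico (0:ℝ) 1, |walshDirichlet a x| := by
  have hsplit : Set.Ico (0:ℝ) 1 = Set.Ico 0 (1/2) ∪ Set.Ico (1/2) 1 :=
    (Set.Ico_union_Ico_eq_Ico (by norm_num) (by norm_num)).symm
  nth_rewrite 1 [hsplit]
  rw [setIntegral_union (Set.Ico_disjoint_Ico_same) measurableSet_Ico
    (intD _ _ _) (intD _ _ _)]
  have h2 : ∫ x in Set.Ico ((1:ℝ)/2) 1, |walshDirichlet (2*a) x| = 0 := by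
    rw [setIntegral_congr_fun (g := fun _ => (0:ℝ)) measurableSet_Ico ?_]
    · simp
    · intro x hx
      dsimp only
      rw [D_two_mul, r0_neg hx.1 hx.2]
      simp
  have h1 : ∫ x in Set.Ico (0:ℝ) (1/2), |walshDirichlet (2*a) x|
      = ∫ x in Set.Ico (0:ℝ) (1/2), 2 * |walshDirichlet a (2*x)| := by
    apply setIntegral_congr_fun measurableSet_Ico
    intro x hx
    dsimp only
    rw [D_two_mul, r0_pos hx.1 hx.2, abs_mul]
    norm_num
  rw [h1, h2, integral_const_mul, scaleD a (by norm_num : (0:ℝ) < 2)]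
  ring

lemma L_four (a : ℕ) :
    (∫ x in Set.Ico (0:ℝ) 1, |walshDirichlet a x|) + 1/2
      ≤ ∫ x in Set.Ico (0:ℝ) 1, |walshDirichlet (4*a+1) x| := by
  have hsplit : Set.Ico (0:ℝ) 1 = Set.Ico 0 (1/4) ∪ Set.Ico (1/4) 1 :=
    (Set.Ico_union_Ico_eq_Ico (by norm_num) (by norm_num)).symm
  nth_rewrite 2 [hsplit]
  rw [setIntegral_union (Set.Ico_disjoint_Ico_same) measurableSet_Ico
    (intD _ _ _) (intD _ _ _)]
  have h2 : ∫ x in Set.Ico ((1:ℝ)/4) 1, |walshDirichlet (4*a+1) x| = 3/4 := by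
    rw [setIntegral_congr_fun (g := fun _ => (1:ℝ)) measurableSet_Ico ?_]
    · rw [setIntegral_const, Real.volume_real_Ico_of_le (by norm_num), smul_eq_mul, mul_one]
      norm_num
    · intro x hx
      dsimp only
      rw [D_four]
      rcases lt_or_ge x (1/2) with h | h
      · rw [r0_neg (x := 2*x) (by linarith [hx.1]) (by linarith)]
        simp [abs_walsh]
      · rw [r0_neg (x := x) h hx.2]
        simp [abs_walsh]
  have hmono : ∫ x in Set.Ico (0:ℝ) (1/4), (4 * |walshDirichlet a (4*x)| - 1)
      ≤ ∫ x in Set.Ico (0:ℝ) (1/4), |walshDirichlet (4*a+1) x| := by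
    apply setIntegral_mono_on
    · exact ((intDc a 4 0 (1/4)).const_mul 4).sub
        (integrableOn_const measure_Ico_lt_top.ne)
    · exact intD _ _ _
    · exact measurableSet_Ico
    · intro x hx
      rw [D_four, r0_pos (x := x) hx.1 (by linarith [hx.2]),
        r0_pos (x := 2*x) (by linarith [hx.1]) (by linarith [hx.2])]
      have hW : |walsh a (4*x)| = 1 := abs_walsh _ _
      set D := walshDirichlet a (4*x) with hD
      set W := walsh a (4*x) with hWd
      have habs : |(1+1) * (1+1) * D| ≤ |(1+1)*(1+1)*D + W| + |W| := by
        have := abs_add_le ((1+1)*(1+1)*D + W) (-W)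
        simpa using this
      rw [abs_mul] at habs
      rw [hW] at habs
      norm_num at habs ⊢
      linarith
  have hval : ∫ x in Set.Ico (0:ℝ) (1/4), (4 * |walshDirichlet a (4*x)| - 1)
      = (∫ x in Set.Ico (0:ℝ) 1, |walshDirichlet a x|) - 1/4 := by
    rw [integral_sub (((intDc a 4 0 (1/4)).const_mul 4))
      (integrableOn_const measure_Ico_lt_top.ne),
      integral_const_mul, scaleD a (by norm_num : (0:ℝ) < 4),
      setIntegral_const, Real.volume_real_Ico_of_le (by norm_num), smul_eq_mul, mul_one]
    ring
  rw [h2]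
  linarith [hmono, hval.symm.le]

def mseq : ℕ → ℕ
  | 0 => 1
  | j+1 => 4 * mseq j + 1

lemma mseq_lb (j : ℕ) : 2^(2*j) ≤ mseq j := by
  induction j with
  | zero => simp [mseq]
  | succ j ih =>
    have : 2^(2*(j+1)) = 4 * 2^(2*j) := by ring
    rw [this, mseq]
    omega

lemma mseq_ub (j : ℕ) : mseq j < 2^(2*j+1) := by
  induction j with
  | zero => simp [mseq]
  | succ j ih =>
    have : 2^(2*(j+1)+1) = 4 * 2^(2*j+1) := by ring
    rw [this, mseq]
    omega

lemma L_mseq (j : ℕ) :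
    1 + (j:ℝ)/2 ≤ ∫ x in Set.Ico (0:ℝ) 1, |walshDirichlet (mseq j) x| := by
  induction j with
  | zero =>
    have hone : ∀ x : ℝ, |walshDirichlet (mseq 0) x| = 1 := by
      intro x
      simp [mseq, walshDirichlet, walsh]
    rw [show (fun x : ℝ => |walshDirichlet (mseq 0) x|) = fun _ => (1:ℝ) from funext hone]
    rw [setIntegral_const, Real.volume_real_Ico_of_le (by norm_num), smul_eq_mul, mul_one]
    norm_num
  | succ j ih =>
    have h := L_four (mseq j)
    rw [show (4 * mseq j + 1) = mseq (j+1) from rfl] at h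
    push_cast
    linarith

lemma logb_le (m k : ℕ) (hm : 0 < m) (h : m ≤ 2^k) : Real.logb 2 m ≤ k := by
  calc Real.logb 2 m ≤ Real.logb 2 (2^k) := by
        apply Real.logb_le_logb_of_le (by norm_num) (by exact_mod_cast hm)
        exact_mod_cast h
    _ = k := by
        rw [show ((2:ℝ)^k : ℝ) = (2:ℝ)^(k:ℕ) from rfl, Real.logb_pow,
          Real.logb_self_eq_one (by norm_num)]
        ring

/-- For every `k ≥ 1` there exists `m_k` with `2^{k-1} ≤ m_k < 2^k` such that
`∫_0^1 |D_{m_k}(x)| dx ≥ (1/4) · log₂ m_k`. -/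
theorem exists_walshDirichlet_L1_large (k : ℕ) (hk : 1 ≤ k) :
    ∃ m : ℕ, 2 ^ (k - 1) ≤ m ∧ m < 2 ^ k ∧
      (1 / 4) * Real.logb 2 m ≤ ∫ x in Set.Ico (0:ℝ) 1, |walshDirichlet m x| := by
  rcases Nat.even_or_odd k with ⟨j, hj⟩ | ⟨j, hj⟩
  · -- even: k = j + j, j ≥ 1
    obtain ⟨i, rfl⟩ : ∃ i, j = i + 1 := ⟨j - 1, by omega⟩
    refine ⟨2 * mseq i, ?_, ?_, ?_⟩
    · have := mseq_lb i
      have hpow : 2^(k-1) = 2 * 2^(2*i) := by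
        rw [show k - 1 = 2*i + 1 by omega]
        ring
      omega
    · have := mseq_ub i
      have hpow : 2^k = 2 * 2^(2*i+1) := by
        rw [show k = 2*i + 2 by omega]
        ring
      omega
    · have hL := L_mseq i
      rw [L_two_mul]
      have hpos : 0 < 2 * mseq i := by
        have := mseq_lb i
        have h2 : 0 < 2^(2*i) := pow_pos (by norm_num) _
        omega
      have hle : 2 * mseq i ≤ 2^k := by
        have h1 := mseq_ub i
        have h2 : 2^k = 2 * 2^(2*i+1) := by rw [show k = 2*i+2 by omega]; ring
        omega
      have hlog := logb_le (2 * mseq i) k hpos hle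
      have hk4 : (k:ℝ)/4 ≤ 1 + (i:ℝ)/2 := by
        have : (k:ℝ) = 2*i + 2 := by exact_mod_cast congrArg Nat.cast (show k = 2*i+2 by omega)
        rw [this]; linarith
      nlinarith [hL, hlog]
  · -- odd: k = 2j+1
    refine ⟨mseq j, ?_, ?_, ?_⟩
    · rw [show k - 1 = 2*j by omega]
      exact mseq_lb j
    · rw [show k = 2*j+1 by omega]
      exact mseq_ub j
    · have hL := L_mseq j
      have hpos : 0 < mseq j := by
        have := mseq_lb j
        have h2 : 0 < 2^(2*j) := pow_pos (by norm_num) _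
        omega
      have hle : mseq j ≤ 2^k := by
        rw [show k = 2*j+1 by omega]
        exact (mseq_ub j).le
      have hlog := logb_le (mseq j) k hpos hle
      have hk4 : (k:ℝ)/4 ≤ 1 + (j:ℝ)/2 := by
        have : (k:ℝ) = 2*j + 1 := by exact_mod_cast congrArg Nat.cast (show k = 2*j+1 by omega)
        rw [this]; linarith
      nlinarith [hL, hlog]
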